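/- For all f₁,f₂ ∈ L₀(0,∞)⁺ and all t₁,t₂ ≥ 0, one has ∫₀^{t₁} f₁*(s) ds + ∫₀^{t₂} f₂*(s) ds ≤ ∫₀^{t₁+t₂} (f₁+f₂)*(s) ds. -/

import Mathlib

open MeasureTheory Filter ENNReal

noncomputable def decRear {α : Type*} [MeasurableSpace α] (μ : Measure α) (f : α → ℝ)
    (t : ℝ) : ℝ≥0∞ :=
  sInf {s : ℝ≥0∞ | μ {x | s < (‖f x‖₊ : ℝ≥0∞)} ≤ ENNReal.ofReal t}

namespace RearAux

noncomputable def μ0 : Measure ℝ := volume.restrict (Set.Ioi (0:ℝ))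

instance : SFinite μ0 := by unfold μ0; infer_instance

noncomputable def dd (f : ℝ → ℝ) (l : ℝ≥0∞) : ℝ≥0∞ := μ0 {x | l < (‖f x‖₊ : ℝ≥0∞)}

lemma dd_antitone (f : ℝ → ℝ) : Antitone (dd f) := by
  intro a b hab
  exact measure_mono (fun x hx => lt_of_le_of_lt hab hx)

lemma dd_right_cont (f : ℝ → ℝ) {l c : ℝ≥0∞} (hl : l ≠ ∞)
    (h : ∀ l' , l < l' → dd f l' ≤ c) : dd f l ≤ c := by
  have hset : {x | l < (‖f x‖₊ : ℝ≥0∞)} = ⋃ n : ℕ, {x | l + ((n:ℝ≥0∞)+1)⁻¹ < (‖f x‖₊ : ℝ≥0∞)} := by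
    ext x
    simp only [Set.mem_setOf_eq, Set.mem_iUnion]
    constructor
    · intro hx
      obtain ⟨m, hm⟩ := exists_between hx
      have hml : m - l > 0 := tsub_pos_of_lt hm.1
      obtain ⟨n, hn⟩ := ENNReal.exists_inv_nat_lt (ne_of_gt hml)
      refine ⟨n, ?_⟩
      have h1 : ((n:ℝ≥0∞)+1)⁻¹ ≤ (n:ℝ≥0∞)⁻¹ := by
        gcongr; exact le_self_add
      have h2 : l + ((n:ℝ≥0∞)+1)⁻¹ ≤ l + (n:ℝ≥0∞)⁻¹ := add_le_add le_rfl h1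
      refine lt_of_le_of_lt (le_trans h2 ?_) hm.2
      calc l + (n:ℝ≥0∞)⁻¹ ≤ l + (m - l) := add_le_add le_rfl hn.le
        _ = m := add_tsub_cancel_of_le hm.1.le
    · rintro ⟨n, hn⟩
      exact lt_of_le_of_lt le_self_add hn
  have hmono : Monotone (fun n : ℕ => {x | l + ((n:ℝ≥0∞)+1)⁻¹ < (‖f x‖₊ : ℝ≥0∞)}) := by
    intro a b hab x hx
    refine lt_of_le_of_lt (add_le_add (le_refl l) ?_) (hx : l + ((a:ℝ≥0∞)+1)⁻¹ < (‖f x‖₊ : ℝ≥0∞))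
    have hc : (a:ℝ≥0∞) + 1 ≤ (b:ℝ≥0∞) + 1 := by gcongr <;> exact_mod_cast hab
    exact ENNReal.inv_le_inv.mpr hc
  have : dd f l = ⨆ n : ℕ, dd f (l + ((n:ℝ≥0∞)+1)⁻¹) := by
    rw [dd, hset, hmono.directed_le.measure_iUnion]
    rfl
  rw [this]
  refine iSup_le fun n => h _ ?_
  refine ENNReal.lt_add_right hl ?_
  simp [ENNReal.inv_ne_zero]

lemma lt_decRear_iff (f : ℝ → ℝ) (t : ℝ) (l : ℝ≥0∞) :
    l < decRear μ0 f t ↔ ENNReal.ofReal t < dd f l := by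
  constructor
  · intro h
    by_contra hc
    push_neg at hc
    have hmem : l ∈ {s : ℝ≥0∞ | μ0 {x | s < (‖f x‖₊ : ℝ≥0∞)} ≤ ENNReal.ofReal t} := hc
    exact absurd (sInf_le hmem) (not_le.mpr h)
  · intro h
    by_contra hc
    push_neg at hc
    have hl : l ≠ ∞ := by
      rintro rfl
      simp only [dd] at h
      have : {x : ℝ | (⊤:ℝ≥0∞) < (‖f x‖₊ : ℝ≥0∞)} = ∅ := by
        ext x; simp
      rw [this] at h
      simp at h
    have : dd f l ≤ ENNReal.ofReal t := by
      refine dd_right_cont f hl fun l' hl' => ?_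
      obtain ⟨s, hs, hsl⟩ := sInf_lt_iff.mp (lt_of_le_of_lt hc hl' :
        decRear μ0 f t < l')
      exact le_trans (dd_antitone f hsl.le) hs
    exact absurd h (not_lt.mpr this)


lemma decRear_antitone (f : ℝ → ℝ) : Antitone (decRear μ0 f) := by
  intro a b hab
  refine sInf_le_sInf fun s hs => ?_
  exact le_trans hs (ENNReal.ofReal_le_ofReal hab)

lemma decRear_measurable (f : ℝ → ℝ) : Measurable (decRear μ0 f) :=
  (decRear_antitone f).measurable

/-- Distribution of the decreasing rearrangement. -/
lemma meas_decRear (f : ℝ → ℝ) {t : ℝ} (ht : 0 ≤ t) (l : ℝ≥0∞) :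
    volume ({s | l < decRear μ0 f s} ∩ Set.Ioo (0:ℝ) t)
      = min (ENNReal.ofReal t) (dd f l) := by
  have hkey : ∀ s : ℝ, (l < decRear μ0 f s ↔ ENNReal.ofReal s < dd f l) :=
    fun s => lt_decRear_iff f s l
  rcases le_or_gt (ENNReal.ofReal t) (dd f l) with hcase | hcase
  · have hset : {s | l < decRear μ0 f s} ∩ Set.Ioo (0:ℝ) t = Set.Ioo (0:ℝ) t := by
      refine Set.inter_eq_self_of_subset_right fun s hs => ?_
      rw [Set.mem_setOf_eq, hkey s]
      exact lt_of_lt_of_le (ENNReal.ofReal_lt_ofReal_iff_of_nonneg hs.1.le |>.mpr hs.2) hcase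
    rw [hset, Real.volume_Ioo, min_eq_left hcase, sub_zero]
  · have hfin : dd f l ≠ ∞ := (lt_of_lt_of_le hcase le_top).ne
    have htoReal : (dd f l).toReal ≤ t := by
      have := ENNReal.toReal_mono ofReal_ne_top hcase.le
      rwa [ENNReal.toReal_ofReal ht] at this
    have hset : {s | l < decRear μ0 f s} ∩ Set.Ioo (0:ℝ) t
        = Set.Ioo (0:ℝ) ((dd f l).toReal) := by
      ext s
      simp only [Set.mem_inter_iff, Set.mem_setOf_eq, Set.mem_Ioo, hkey s]
      constructor
      · rintro ⟨h1, h2, h3⟩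
        exact ⟨h2, (ENNReal.ofReal_lt_iff_lt_toReal h2.le hfin).mp h1⟩
      · rintro ⟨h1, h2⟩
        exact ⟨(ENNReal.ofReal_lt_iff_lt_toReal h1.le hfin).mpr h2, h1,
          lt_of_lt_of_le h2 htoReal⟩
    rw [hset, Real.volume_Ioo, sub_zero, ENNReal.ofReal_toReal hfin,
      min_eq_right hcase.le]

/-- Layer cake formula for `ℝ≥0∞`-valued functions. -/
lemma layercake_ennreal {α : Type*} [MeasurableSpace α] (ν : Measure α) [SFinite ν]
    {g : α → ℝ≥0∞} (hg : Measurable g) :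
    ∫⁻ x, g x ∂ν = ∫⁻ l in Set.Ioi (0:ℝ), ν {x | ENNReal.ofReal l < g x} := by
  have hrepr : ∀ a : ℝ≥0∞,
      a = ∫⁻ l in Set.Ioi (0:ℝ), Set.indicator {l' : ℝ | ENNReal.ofReal l' < a}
        (fun _ => (1:ℝ≥0∞)) l := by
    intro a
    rw [lintegral_indicator_const₀]
    · rw [one_mul, Measure.restrict_apply₀']
      · rcases eq_or_ne a ∞ with rfl | ha
        · have : {l' : ℝ | ENNReal.ofReal l' < ∞} = Set.univ := by
            ext l'; simp [ofReal_lt_top]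
          rw [this, Set.univ_inter, Real.volume_Ioi]
        · have : {l' : ℝ | ENNReal.ofReal l' < a} ∩ Set.Ioi 0 = Set.Ioo 0 a.toReal := by
            ext l'
            simp only [Set.mem_inter_iff, Set.mem_setOf_eq, Set.mem_Ioi, Set.mem_Ioo]
            constructor
            · rintro ⟨h1, h2⟩
              exact ⟨h2, (ENNReal.ofReal_lt_iff_lt_toReal h2.le ha).mp h1⟩
            · rintro ⟨h1, h2⟩
              exact ⟨(ENNReal.ofReal_lt_iff_lt_toReal h1.le ha).mpr h2, h1⟩
          rw [this, Real.volume_Ioo, sub_zero, ENNReal.ofReal_toReal ha]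
      · exact measurableSet_Ioi.nullMeasurableSet
    · exact (measurableSet_lt measurable_ofReal measurable_const).nullMeasurableSet
  have step1 : ∫⁻ x, g x ∂ν
      = ∫⁻ x, (∫⁻ l in Set.Ioi (0:ℝ), Set.indicator {l' : ℝ | ENNReal.ofReal l' < g x}
          (fun _ => (1:ℝ≥0∞)) l) ∂ν :=
    lintegral_congr fun x => hrepr (g x)
  have hS : MeasurableSet {p : α × ℝ | ENNReal.ofReal p.2 < g p.1} :=
    measurableSet_lt (measurable_ofReal.comp measurable_snd) (hg.comp measurable_fst)
  have hmbl : Measurable (Function.uncurry fun (x : α) (l : ℝ) =>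
      Set.indicator {l' : ℝ | ENNReal.ofReal l' < g x} (fun _ => (1:ℝ≥0∞)) l) := by
    have : (Function.uncurry fun (x : α) (l : ℝ) =>
        Set.indicator {l' : ℝ | ENNReal.ofReal l' < g x} (fun _ => (1:ℝ≥0∞)) l)
        = Set.indicator {p : α × ℝ | ENNReal.ofReal p.2 < g p.1} (fun _ => (1:ℝ≥0∞)) := by
      ext p
      simp only [Function.uncurry, Set.indicator_apply, Set.mem_setOf_eq]
    rw [this]
    exact measurable_const.indicator hS
  rw [step1, lintegral_lintegral_swap hmbl.aemeasurable]
  refine lintegral_congr fun l => ?_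
  have : ∀ x : α, Set.indicator {l' : ℝ | ENNReal.ofReal l' < g x} (fun _ => (1:ℝ≥0∞)) l
      = Set.indicator {x' : α | ENNReal.ofReal l < g x'} (fun _ => (1:ℝ≥0∞)) x := by
    intro x
    simp only [Set.indicator_apply, Set.mem_setOf_eq]
  simp_rw [this]
  rw [lintegral_indicator_const (measurableSet_lt measurable_const hg), one_mul]


lemma integral_decRear (f : ℝ → ℝ) {t : ℝ} (ht : 0 ≤ t) :
    ∫⁻ s in Set.Ioo (0:ℝ) t, decRear μ0 f s
      = ∫⁻ l in Set.Ioi (0:ℝ), min (ENNReal.ofReal t) (dd f (ENNReal.ofReal l)) := by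
  rw [layercake_ennreal _ (decRear_measurable f)]
  refine lintegral_congr fun l => ?_
  rw [Measure.restrict_apply' measurableSet_Ioo]
  exact meas_decRear f ht _

lemma hardy_littlewood (f : ℝ → ℝ) (hf : Measurable f) {t : ℝ} (ht : 0 ≤ t)
    {E : Set ℝ} (hE : MeasurableSet E) (hEt : μ0 E ≤ ENNReal.ofReal t) :
    ∫⁻ x in E, (‖f x‖₊ : ℝ≥0∞) ∂μ0 ≤ ∫⁻ s in Set.Ioo (0:ℝ) t, decRear μ0 f s := by
  rw [integral_decRear f ht,
    layercake_ennreal (μ0.restrict E) hf.nnnorm.coe_nnreal_ennreal]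
  refine lintegral_mono fun l => ?_
  rw [Measure.restrict_apply' hE]
  refine le_min (le_trans (measure_mono Set.inter_subset_right) hEt)
    (measure_mono Set.inter_subset_left)

lemma mu0_apply (X : Set ℝ) : μ0 X = volume (X ∩ Set.Ioi 0) :=
  Measure.restrict_apply' measurableSet_Ioi

lemma exists_subset_measure_eq (D : Set ℝ) (hD : MeasurableSet D) {r : ℝ≥0∞}
    (hr : r ≠ ∞) (hrD : r ≤ μ0 D) : ∃ F, F ⊆ D ∧ MeasurableSet F ∧ μ0 F = r := by
  rcases eq_or_lt_of_le hrD with heq | hlt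
  · exact ⟨D, subset_rfl, hD, heq.symm⟩
  have hfin : ∀ R : ℝ, μ0 (D ∩ Set.Iio R) ≠ ∞ := by
    intro R
    rw [mu0_apply]
    refine (lt_of_le_of_lt (measure_mono
      (show D ∩ Set.Iio R ∩ Set.Ioi 0 ⊆ Set.Ioo 0 R from fun x hx => ⟨hx.2, hx.1.2⟩)) ?_).ne
    rw [Real.volume_Ioo]; exact ofReal_lt_top
  set g : ℝ → ℝ := fun R => (μ0 (D ∩ Set.Iio R)).toReal with hg
  have hmono : ∀ R R' : ℝ, R ≤ R' → μ0 (D ∩ Set.Iio R') ≤ μ0 (D ∩ Set.Iio R) + ENNReal.ofReal (R' - R) := by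
    intro R R' hRR'
    have hsub : D ∩ Set.Iio R' ⊆ (D ∩ Set.Iio R) ∪ Set.Ico R R' := by
      rintro x ⟨hxD, hxR'⟩
      rcases lt_or_ge x R with h | h
      · exact Or.inl ⟨hxD, h⟩
      · exact Or.inr ⟨h, hxR'⟩
    refine le_trans (measure_mono hsub) (le_trans (measure_union_le _ _) ?_)
    gcongr
    rw [mu0_apply]
    refine le_trans (measure_mono Set.inter_subset_left) ?_
    rw [Real.volume_Ico]
  have gmono : Monotone g := fun R R' h =>
    ENNReal.toReal_mono (hfin R')
      (measure_mono (Set.inter_subset_inter_right D (Set.Iio_subset_Iio h)))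
  have gkey : ∀ R R' : ℝ, R ≤ R' → g R' - g R ≤ R' - R := by
    intro R R' h
    have h2 := ENNReal.toReal_mono
      (ENNReal.add_ne_top.mpr ⟨hfin R, ofReal_ne_top⟩) (hmono R R' h)
    rw [ENNReal.toReal_add (hfin R) ofReal_ne_top, ENNReal.toReal_ofReal (by linarith)] at h2
    have : g R' ≤ g R + (R' - R) := h2
    linarith
  have hlip : LipschitzWith 1 g := by
    refine LipschitzWith.of_dist_le_mul fun R R' => ?_
    simp only [NNReal.coe_one, one_mul, Real.dist_eq]
    rcases le_total R R' with h | h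
    · rw [abs_of_nonpos (sub_nonpos.mpr (gmono h)), abs_of_nonpos (by linarith)]
      have := gkey R R' h
      linarith
    · rw [abs_of_nonneg (sub_nonneg.mpr (gmono h)), abs_of_nonneg (by linarith)]
      have := gkey R' R h
      linarith
  have hD_union : D = ⋃ n : ℕ, D ∩ Set.Iio (n : ℝ) := by
    ext x
    simp only [Set.mem_iUnion, Set.mem_inter_iff, Set.mem_Iio]
    constructor
    · intro hx
      obtain ⟨n, hn⟩ := exists_nat_gt x
      exact ⟨n, hx, hn⟩
    · rintro ⟨n, hn, _⟩; exact hn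
  have hsup : μ0 D = ⨆ n : ℕ, μ0 (D ∩ Set.Iio (n : ℝ)) := by
    conv_lhs => rw [hD_union]
    refine Directed.measure_iUnion ?_
    refine (Monotone.directed_le ?_)
    intro a b hab
    exact Set.inter_subset_inter_right D (Set.Iio_subset_Iio (by exact_mod_cast hab))
  obtain ⟨n, hn⟩ : ∃ n : ℕ, r < μ0 (D ∩ Set.Iio (n:ℝ)) := by
    rw [hsup] at hlt
    exact lt_iSup_iff.mp hlt
  have hg0 : g 0 = 0 := by
    have : D ∩ Set.Iio (0:ℝ) ∩ Set.Ioi 0 = ∅ := by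
      ext x
      simp only [Set.mem_inter_iff, Set.mem_Iio, Set.mem_Ioi, Set.mem_empty_iff_false,
        iff_false, not_and]
      rintro ⟨_, h1⟩
      exact not_lt.mpr h1.le
      
    simp [hg, mu0_apply, this]
  have hrIcc : r.toReal ∈ Set.Icc (g 0) (g (n:ℝ)) := by
    constructor
    · rw [hg0]; exact ENNReal.toReal_nonneg
    · exact ENNReal.toReal_mono (hfin _) hn.le
  obtain ⟨R, _, hR⟩ := intermediate_value_Icc (Nat.cast_nonneg n) hlip.continuous.continuousOn hrIcc
  refine ⟨D ∩ Set.Iio R, Set.inter_subset_left, hD.inter measurableSet_Iio, ?_⟩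
  exact (ENNReal.toReal_eq_toReal_iff' (hfin R) hr).mp hR


lemma measurableSet_gt (f : ℝ → ℝ) (hf : Measurable f) (l : ℝ≥0∞) :
    MeasurableSet {x : ℝ | l < (‖f x‖₊ : ℝ≥0∞)} :=
  measurableSet_lt measurable_const hf.nnnorm.coe_nnreal_ennreal

lemma dirA_top (f : ℝ → ℝ) (hf : Measurable f) {t : ℝ} (ht : 0 < t)
    (hcase : decRear μ0 f t = ∞) :
    ∃ E : Set ℝ, MeasurableSet E ∧ μ0 E ≤ ENNReal.ofReal t ∧
      ∫⁻ x in E, (‖f x‖₊ : ℝ≥0∞) ∂μ0 = ∞ := by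
  set T := ENNReal.ofReal t with hT
  have hT0 : 0 < T := ENNReal.ofReal_pos.mpr ht
  have hTfin : T ≠ ∞ := ofReal_ne_top
  have hdd : ∀ l : ℝ≥0∞, l ≠ ∞ → T < dd f l := by
    intro l hl
    exact (lt_decRear_iff f t l).mp (hcase ▸ hl.lt_top)
  -- pick subsets of {x | lₙ < ‖f x‖₊} with measure rₙ where lₙ * rₙ = n
  have hchoice : ∀ n : ℕ, ∃ E : Set ℝ,
      E ⊆ {x : ℝ | ((n:ℝ≥0∞) * 2^(n+1) * T⁻¹) < (‖f x‖₊ : ℝ≥0∞)} ∧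
      MeasurableSet E ∧ μ0 E = T * (2:ℝ≥0∞)⁻¹^(n+1) := by
    intro n
    have hlfin : ((n:ℝ≥0∞) * 2^(n+1) * T⁻¹) ≠ ∞ := by
      refine ENNReal.mul_ne_top (ENNReal.mul_ne_top (natCast_ne_top n)
        (ENNReal.pow_ne_top (by norm_num))) ?_
      exact ENNReal.inv_ne_top.mpr hT0.ne'
    refine exists_subset_measure_eq _ (measurableSet_gt f hf _) ?_ ?_
    · exact ENNReal.mul_ne_top hTfin (ENNReal.pow_ne_top (by norm_num))
    · have h1 : T * (2:ℝ≥0∞)⁻¹^(n+1) ≤ T := by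
        nth_rewrite 2 [← mul_one T]
        gcongr
        exact pow_le_one' (by norm_num) _
      exact le_trans h1 (hdd _ hlfin).le
  choose Es hEsub hEmeas hEvol using hchoice
  refine ⟨⋃ n, Es n, MeasurableSet.iUnion hEmeas, ?_, ?_⟩
  · refine le_trans (measure_iUnion_le _) ?_
    have : ∀ n : ℕ, μ0 (Es n) = T * (2:ℝ≥0∞)⁻¹^(n+1) := hEvol
    simp_rw [this]
    rw [ENNReal.tsum_mul_left]
    calc T * ∑' n : ℕ, (2:ℝ≥0∞)⁻¹^(n+1) = T * 1 := by
          congr 1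
          have : ∑' n : ℕ, (2:ℝ≥0∞)⁻¹^(n+1) = 2⁻¹ * ∑' n : ℕ, (2:ℝ≥0∞)⁻¹^n := by
            rw [← ENNReal.tsum_mul_left]
            congr 1
            ext n
            ring
          rw [this, ENNReal.tsum_geometric, ENNReal.one_sub_inv_two]
          rw [ENNReal.mul_inv_cancel (ENNReal.inv_ne_zero.mpr ofNat_ne_top)
            (ENNReal.inv_ne_top.mpr two_ne_zero)]
      _ = T := mul_one T
      _ ≤ T := le_rfl
  · have hbound : ∀ n : ℕ, (n : ℝ≥0∞) ≤ ∫⁻ x in ⋃ m, Es m, (‖f x‖₊ : ℝ≥0∞) ∂μ0 := by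
      intro n
      have h1 : (n:ℝ≥0∞) = ((n:ℝ≥0∞) * 2^(n+1) * T⁻¹) * (T * (2:ℝ≥0∞)⁻¹^(n+1)) := by
        rw [← ENNReal.inv_pow]
        calc (n:ℝ≥0∞) = (n:ℝ≥0∞) * ((2:ℝ≥0∞)^(n+1) * ((2:ℝ≥0∞)^(n+1))⁻¹)
            * (T⁻¹ * T) := by
              rw [ENNReal.mul_inv_cancel (by positivity) (ENNReal.pow_ne_top (by norm_num)),
                ENNReal.inv_mul_cancel hT0.ne' hTfin, mul_one, mul_one]
          _ = (n:ℝ≥0∞) * 2^(n+1) * T⁻¹ * (T * ((2:ℝ≥0∞)^(n+1))⁻¹) := by ring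
      rw [h1, ← hEvol n, ← setLIntegral_const (Es n) _]
      refine le_trans (setLIntegral_mono hf.nnnorm.coe_nnreal_ennreal
        (fun x hx => (hEsub n hx).le)) ?_
      exact lintegral_mono_set (Set.subset_iUnion Es n)
    by_contra hcon
    obtain ⟨n, hn⟩ := ENNReal.exists_nat_gt hcon
    exact absurd (hbound n) (not_le.mpr hn)


lemma dirA (f : ℝ → ℝ) (hf : Measurable f) {t : ℝ} (ht : 0 ≤ t)
    {δ : ℝ≥0∞} (hδ0 : 0 < δ) (hδfin : δ ≠ ∞) :
    ∃ E : Set ℝ, MeasurableSet E ∧ μ0 E ≤ ENNReal.ofReal t ∧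
      ∫⁻ s in Set.Ioo (0:ℝ) t, decRear μ0 f s
        ≤ (∫⁻ x in E, (‖f x‖₊ : ℝ≥0∞) ∂μ0) + δ := by
  rcases eq_or_lt_of_le ht with rfl | ht0
  · refine ⟨∅, MeasurableSet.empty, by simp, ?_⟩
    rw [Set.Ioo_self, Measure.restrict_empty, lintegral_zero_measure]
    exact zero_le
  set T := ENNReal.ofReal t with hT
  have hT0 : 0 < T := ENNReal.ofReal_pos.mpr ht0
  have hTfin : T ≠ ∞ := ofReal_ne_top
  rcases eq_or_ne (decRear μ0 f t) ∞ with hcase | hcase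
  · obtain ⟨E, hEm, hEμ, hEtop⟩ := dirA_top f hf ht0 hcase
    exact ⟨E, hEm, hEμ, by rw [hEtop]; simp⟩
  -- finite case
  set l₀ := decRear μ0 f t with hl₀
  have hdd0 : dd f l₀ ≤ T := by
    refine dd_right_cont f hcase fun l' hl' => ?_
    obtain ⟨s, hs, hsl⟩ := sInf_lt_iff.mp (hl' : decRear μ0 f t < l')
    exact le_trans (dd_antitone f hsl.le) hs
  rcases eq_or_ne l₀ 0 with hl₀0 | hl₀0
  · -- rearrangement inf is 0 : take E = {x | 0 < ‖f x‖₊}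
    refine ⟨{x : ℝ | (0:ℝ≥0∞) < (‖f x‖₊ : ℝ≥0∞)}, measurableSet_gt f hf 0, ?_, ?_⟩
    · rw [show μ0 {x : ℝ | (0:ℝ≥0∞) < (‖f x‖₊ : ℝ≥0∞)} = dd f 0 from rfl]
      exact hl₀0 ▸ hdd0
    · rw [integral_decRear f ht,
        layercake_ennreal (μ0.restrict _) hf.nnnorm.coe_nnreal_ennreal]
      refine le_trans (lintegral_mono fun l => ?_) le_self_add
      rw [Measure.restrict_apply' (measurableSet_gt f hf 0)]
      have hsub : {x : ℝ | ENNReal.ofReal l < (‖f x‖₊:ℝ≥0∞)}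
          ⊆ {x : ℝ | (0:ℝ≥0∞) < (‖f x‖₊:ℝ≥0∞)} :=
        fun x hx => (lt_of_le_of_lt zero_le hx : (0:ℝ≥0∞) < (‖f x‖₊:ℝ≥0∞))
      rw [Set.inter_eq_self_of_subset_left hsub]
      exact min_le_right _ _
  -- main case : 0 < l₀ < ∞
  set ε := min l₀ (δ / T) with hε
  have hε0 : 0 < ε := lt_min (pos_iff_ne_zero.mpr hl₀0) (ENNReal.div_pos hδ0.ne' hTfin)
  have hεl₀ : ε ≤ l₀ := min_le_left _ _
  have hεfin : ε ≠ ∞ := (lt_of_le_of_lt hεl₀ hcase.lt_top).ne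
  set l₁ := l₀ - ε with hl₁
  have hl₁lt : l₁ < l₀ := ENNReal.sub_lt_self hcase hl₀0 hε0.ne'
  have hl₁fin : l₁ ≠ ∞ := (lt_of_lt_of_le hl₁lt hcase.lt_top.le).ne
  have hddl₁ : T < dd f l₁ := (lt_decRear_iff f t l₁).mp hl₁lt
  set A := {x : ℝ | l₁ < (‖f x‖₊ : ℝ≥0∞)} with hA
  set B := {x : ℝ | l₀ < (‖f x‖₊ : ℝ≥0∞)} with hB
  have hBA : B ⊆ A := fun x hx => lt_of_le_of_lt hl₁lt.le hx
  have hDbound : T - dd f l₀ ≤ μ0 (A \ B) := by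
    rw [tsub_le_iff_left]
    refine le_trans hddl₁.le ?_
    refine le_trans (measure_mono (show A ⊆ B ∪ (A \ B) by
      intro x hx
      rcases Classical.em (x ∈ B) with h | h
      · exact Or.inl h
      · exact Or.inr ⟨hx, h⟩)) (measure_union_le _ _)
  have hrfin : T - dd f l₀ ≠ ∞ := (lt_of_le_of_lt tsub_le_self hTfin.lt_top).ne
  obtain ⟨F', hF'sub, hF'm, hF'μ⟩ := exists_subset_measure_eq (A \ B)
    ((measurableSet_gt f hf l₁).diff (measurableSet_gt f hf l₀)) hrfin hDbound
  set E := B ∪ F' with hE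
  have hEm : MeasurableSet E := (measurableSet_gt f hf l₀).union hF'm
  have hdisj : Disjoint B F' := Set.disjoint_sdiff_right.mono_right hF'sub
  have hEμ : μ0 E = T := by
    rw [hE, measure_union hdisj hF'm, hF'μ,
      show μ0 B = dd f l₀ from rfl, add_tsub_cancel_of_le hdd0]
  have hE_sub_A : E ⊆ A := Set.union_subset hBA (hF'sub.trans Set.diff_subset)
  have hB_sub_E : B ⊆ E := Set.subset_union_left
  have key : ∀ l ∈ Set.Ioi (0:ℝ), min T (dd f (ENNReal.ofReal l))
      ≤ μ0 ({x : ℝ | ENNReal.ofReal l < (‖f x‖₊ : ℝ≥0∞)} ∩ E)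
        + T * Set.indicator (Set.Ico l₁.toReal l₀.toReal) (fun _ => (1:ℝ≥0∞)) l := by
    intro l hl
    rcases lt_or_ge (ENNReal.ofReal l) l₁ with hL1 | hL1
    · have hEsub : E ⊆ {x : ℝ | ENNReal.ofReal l < (‖f x‖₊ : ℝ≥0∞)} :=
        fun x hx => lt_trans hL1 (hE_sub_A hx)
      rw [Set.inter_eq_self_of_subset_right hEsub]
      calc min T (dd f (ENNReal.ofReal l)) ≤ T := min_le_left _ _
        _ = μ0 E := hEμ.symm
        _ ≤ _ := le_self_add
    rcases lt_or_ge (ENNReal.ofReal l) l₀ with hL0 | hL0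
    · have hmem : l ∈ Set.Ico l₁.toReal l₀.toReal := by
        constructor
        · have := ENNReal.toReal_mono ofReal_ne_top hL1
          rwa [ENNReal.toReal_ofReal (le_of_lt hl)] at this
        · exact (ENNReal.ofReal_lt_iff_lt_toReal (le_of_lt hl) hcase).mp hL0
      rw [Set.indicator_of_mem hmem, mul_one]
      exact le_trans (min_le_left _ _) le_add_self
    · have hsub : {x : ℝ | ENNReal.ofReal l < (‖f x‖₊ : ℝ≥0∞)} ⊆ E :=
        fun x hx => hB_sub_E (lt_of_le_of_lt hL0 hx)
      rw [Set.inter_eq_self_of_subset_left hsub]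
      exact le_trans (min_le_right _ _) le_self_add
  refine ⟨E, hEm, le_of_eq hEμ, ?_⟩
  rw [integral_decRear f ht]
  have hμmeas : Measurable fun l : ℝ =>
      μ0 ({x : ℝ | ENNReal.ofReal l < (‖f x‖₊ : ℝ≥0∞)} ∩ E) := by
    have : Antitone fun l : ℝ =>
        μ0 ({x : ℝ | ENNReal.ofReal l < (‖f x‖₊ : ℝ≥0∞)} ∩ E) := by
      intro a b hab
      refine measure_mono (Set.inter_subset_inter_left E fun x hx => ?_)
      exact lt_of_le_of_lt (ENNReal.ofReal_le_ofReal hab) hx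
    exact this.measurable
  have hindmeas : Measurable fun l : ℝ =>
      T * Set.indicator (Set.Ico l₁.toReal l₀.toReal) (fun _ => (1:ℝ≥0∞)) l :=
    (measurable_const.indicator measurableSet_Ico).const_mul T
  refine le_trans (setLIntegral_mono (hμmeas.add hindmeas) key) ?_
  simp only [Pi.add_apply]
  rw [lintegral_add_left hμmeas]
  refine add_le_add (le_of_eq ?_) ?_
  · rw [layercake_ennreal (μ0.restrict E) hf.nnnorm.coe_nnreal_ennreal]
    exact lintegral_congr fun l => (Measure.restrict_apply' hEm).symm
  · rw [lintegral_const_mul T (measurable_const.indicator measurableSet_Ico),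
      lintegral_indicator measurableSet_Ico, setLIntegral_one]
    have hIco : (volume.restrict (Set.Ioi (0:ℝ))) (Set.Ico l₁.toReal l₀.toReal) ≤ ε := by
      rw [Measure.restrict_apply' measurableSet_Ioi]
      refine le_trans (measure_mono Set.inter_subset_left) ?_
      rw [Real.volume_Ico]
      have h1 : l₀.toReal - l₁.toReal = ε.toReal := by
        rw [← ENNReal.toReal_sub_of_le hl₁lt.le hcase, hl₁,
          ENNReal.sub_sub_cancel hcase hεl₀]
      rw [h1, ENNReal.ofReal_toReal hεfin]
    calc T * (volume.restrict (Set.Ioi (0:ℝ))) (Set.Ico l₁.toReal l₀.toReal)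
        ≤ T * (δ / T) := by
          gcongr
          exact le_trans hIco (min_le_right _ _)
      _ = δ / T * T := mul_comm _ _
      _ = δ := ENNReal.div_mul_cancel hT0.ne' hTfin


lemma decRear_congr {f g : ℝ → ℝ} (h : f =ᵐ[μ0] g) :
    decRear μ0 f = decRear μ0 g := by
  have hdd : ∀ l : ℝ≥0∞, μ0 {x | l < (‖f x‖₊ : ℝ≥0∞)} = μ0 {x | l < (‖g x‖₊ : ℝ≥0∞)} := by
    intro l
    refine measure_congr (Filter.eventuallyEq_set.mpr (h.mono fun x hx => ?_))
    simp only [Set.mem_setOf_eq, hx]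
  funext t
  simp only [decRear]
  congr 1
  ext s
  simp only [Set.mem_setOf_eq, hdd s]

end RearAux

/-- **Statement 10.** For all `f₁, f₂ ∈ L₀(0,∞)⁺` and all `t₁, t₂ ≥ 0`,
`∫₀^{t₁} f₁*(s) ds + ∫₀^{t₂} f₂*(s) ds ≤ ∫₀^{t₁+t₂} (f₁+f₂)*(s) ds`. -/
theorem rearrangement_superadditive (f₁ f₂ : ℝ → ℝ)
    (hf₁ : AEMeasurable f₁ (volume.restrict (Set.Ioi (0 : ℝ))))
    (hf₂ : AEMeasurable f₂ (volume.restrict (Set.Ioi (0 : ℝ))))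
    (hf₁0 : 0 ≤ᵐ[volume.restrict (Set.Ioi (0 : ℝ))] f₁)
    (hf₂0 : 0 ≤ᵐ[volume.restrict (Set.Ioi (0 : ℝ))] f₂)
    (t₁ t₂ : ℝ) (ht₁ : 0 ≤ t₁) (ht₂ : 0 ≤ t₂) :
    (∫⁻ s in Set.Ioo (0 : ℝ) t₁,
        decRear (volume.restrict (Set.Ioi (0 : ℝ))) f₁ s) +
      ∫⁻ s in Set.Ioo (0 : ℝ) t₂,
        decRear (volume.restrict (Set.Ioi (0 : ℝ))) f₂ s ≤
    ∫⁻ s in Set.Ioo (0 : ℝ) (t₁ + t₂),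
      decRear (volume.restrict (Set.Ioi (0 : ℝ))) (f₁ + f₂) s := by
  open RearAux in
  show _
  have hμ : volume.restrict (Set.Ioi (0 : ℝ)) = μ0 := rfl
  rw [hμ] at *
  -- replace f₁, f₂ by measurable nonnegative representatives
  set g₁ : ℝ → ℝ := fun x => max (hf₁.mk f₁ x) 0 with hg₁def
  set g₂ : ℝ → ℝ := fun x => max (hf₂.mk f₂ x) 0 with hg₂def
  have hg₁m : Measurable g₁ := hf₁.measurable_mk.max measurable_const
  have hg₂m : Measurable g₂ := hf₂.measurable_mk.max measurable_const
  have hg₁0 : ∀ x, 0 ≤ g₁ x := fun x => le_max_right _ _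
  have hg₂0 : ∀ x, 0 ≤ g₂ x := fun x => le_max_right _ _
  have hae₁ : f₁ =ᵐ[μ0] g₁ := by
    filter_upwards [hf₁.ae_eq_mk, hf₁0] with x hx hx0
    rw [hg₁def]
    simp only [← hx]
    exact (max_eq_left hx0).symm
  have hae₂ : f₂ =ᵐ[μ0] g₂ := by
    filter_upwards [hf₂.ae_eq_mk, hf₂0] with x hx hx0
    rw [hg₂def]
    simp only [← hx]
    exact (max_eq_left hx0).symm
  rw [decRear_congr hae₁, decRear_congr hae₂,
    decRear_congr (show (f₁ + f₂) =ᵐ[μ0] (g₁ + g₂) from hae₁.add hae₂)]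
  -- main estimate
  refine ENNReal.le_of_forall_pos_le_add fun ε hε _ => ?_
  set δ : ℝ≥0∞ := (ε : ℝ≥0∞) / 2 with hδdef
  have hδ0 : 0 < δ := ENNReal.div_pos (by exact_mod_cast hε.ne') (by norm_num)
  have hδfin : δ ≠ ∞ := by
    refine (ENNReal.div_lt_top coe_ne_top (by norm_num)).ne
  obtain ⟨E₁, hE₁m, hE₁μ, hE₁int⟩ := dirA g₁ hg₁m ht₁ hδ0 hδfin
  obtain ⟨E₂, hE₂m, hE₂μ, hE₂int⟩ := dirA g₂ hg₂m ht₂ hδ0 hδfin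
  calc (∫⁻ s in Set.Ioo (0:ℝ) t₁, decRear μ0 g₁ s)
        + ∫⁻ s in Set.Ioo (0:ℝ) t₂, decRear μ0 g₂ s
      ≤ ((∫⁻ x in E₁, (‖g₁ x‖₊ : ℝ≥0∞) ∂μ0) + δ)
        + ((∫⁻ x in E₂, (‖g₂ x‖₊ : ℝ≥0∞) ∂μ0) + δ) := add_le_add hE₁int hE₂int
    _ = ((∫⁻ x in E₁, (‖g₁ x‖₊ : ℝ≥0∞) ∂μ0)
        + (∫⁻ x in E₂, (‖g₂ x‖₊ : ℝ≥0∞) ∂μ0)) + (δ + δ) := add_add_add_comm _ _ _ _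
    _ = ((∫⁻ x in E₁, (‖g₁ x‖₊ : ℝ≥0∞) ∂μ0)
        + (∫⁻ x in E₂, (‖g₂ x‖₊ : ℝ≥0∞) ∂μ0)) + ε := by rw [ENNReal.add_halves]
    _ ≤ ((∫⁻ x in E₁ ∪ E₂, (‖g₁ x‖₊ : ℝ≥0∞) ∂μ0)
        + (∫⁻ x in E₁ ∪ E₂, (‖g₂ x‖₊ : ℝ≥0∞) ∂μ0)) + ε := by
          gcongr
          · exact Set.subset_union_left
          · exact Set.subset_union_right
    _ = (∫⁻ x in E₁ ∪ E₂, ((‖g₁ x‖₊ : ℝ≥0∞) + (‖g₂ x‖₊ : ℝ≥0∞)) ∂μ0) + ε := by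
          rw [lintegral_add_left hg₁m.nnnorm.coe_nnreal_ennreal]
    _ = (∫⁻ x in E₁ ∪ E₂, (‖(g₁ + g₂) x‖₊ : ℝ≥0∞) ∂μ0) + ε := by
          congr 1
          refine lintegral_congr fun x => ?_
          simp only [Pi.add_apply, ← enorm_eq_nnnorm]
          rw [Real.enorm_eq_ofReal (hg₁0 x), Real.enorm_eq_ofReal (hg₂0 x),
            Real.enorm_eq_ofReal (add_nonneg (hg₁0 x) (hg₂0 x)),
            ENNReal.ofReal_add (hg₁0 x) (hg₂0 x)]
    _ ≤ (∫⁻ s in Set.Ioo (0:ℝ) (t₁+t₂), decRear μ0 (g₁ + g₂) s) + ε := by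
          refine add_le_add ?_ le_rfl
          refine hardy_littlewood (g₁ + g₂) (hg₁m.add hg₂m) (add_nonneg ht₁ ht₂)
            (hE₁m.union hE₂m) ?_
          refine le_trans (measure_union_le E₁ E₂) ?_
          rw [ENNReal.ofReal_add ht₁ ht₂]
          exact add_le_add hE₁μ hE₂μ
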